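/- Let α > 0, α_r > 0 and σ ∈ ℝ. Let A be the 2 × 2 real matrix with rows (−α − α_r, α_r) and (α_r, −α − α_r), and let G be the 2 × 2 real matrix with rows (0, 0) and (0, σ). Then for every t ≥ 0, the (1,1) entry of ∫₀^{t} exp((t − u)A) · G · Gᵀ · exp((t − u)Aᵀ) du equals (σ²/4) · [ (1 − e^{−2α t})/(2α) − (1 − e^{−2(α + α_r) t})/(α + α_r) + (1 − e^{−2(α + 2α_r) t})/(2(α + 2α_r)) ]. -/

import Mathlib

open Matrix MeasureTheory intervalIntegral NormedSpace

set_option maxHeartbeats 1000000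

/-- Integral of a decaying exponential. -/
lemma int_exp_aux (c t : ℝ) (hc : c ≠ 0) :
    ∫ u in (0:ℝ)..t, Real.exp (-c * (t - u)) = (1 - Real.exp (-c * t)) / c := by
  have h : ∀ u ∈ Set.uIcc (0:ℝ) t,
      HasDerivAt (fun u => Real.exp (-c * (t - u))) (c * Real.exp (-c * (t - u))) u := by
    intro u _
    have h1 : HasDerivAt (fun u : ℝ => -c * (t - u)) c u := by
      simpa using ((hasDerivAt_id u).const_sub t).const_mul (-c)
    simpa [mul_comm] using h1.exp
  have hI : ∫ u in (0:ℝ)..t, c * Real.exp (-c * (t - u)) = 1 - Real.exp (-c * t) := by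
    rw [intervalIntegral.integral_eq_sub_of_hasDerivAt h
      (Continuous.intervalIntegrable (by continuity) _ _)]
    simp
  rw [eq_div_iff hc, mul_comm, ← intervalIntegral.integral_const_mul]
  exact hI

/-- The variance `Q^{(11)}` of the trigger-zone component in the two-compartment
neuronal model: with drift matrix `A = [[-α-α_r, α_r],[α_r, -α-α_r]]`
(`α, α_r > 0`) and diffusion matrix `G = [[0,0],[0,σ]]`, for every `t ≥ 0` the
`(1,1)` entry of `∫₀ᵗ exp((t-u)A) G Gᵀ exp((t-u)Aᵀ) du` equals
`(σ²/4) [(1 - e^{-2αt})/(2α) - (1 - e^{-2(α+α_r)t})/(α+α_r)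
          + (1 - e^{-2(α+2α_r)t})/(2(α+2α_r))]`. -/
theorem two_compartment_variance
    (α αr σ : ℝ) (hα : 0 < α) (hαr : 0 < αr)
    (A G : Matrix (Fin 2) (Fin 2) ℝ)
    (hA : A = !![-α - αr, αr; αr, -α - αr]) (hG : G = !![0, 0; 0, σ])
    (t : ℝ) (ht : 0 ≤ t) :
    (∫ u in (0:ℝ)..t, (exp ((t - u) • A) * G * Gᵀ * exp ((t - u) • Aᵀ)) 0 0) =
      σ ^ 2 / 4 *
        ((1 - Real.exp (-2 * α * t)) / (2 * α) -
          (1 - Real.exp (-2 * (α + αr) * t)) / (α + αr) +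
          (1 - Real.exp (-2 * (α + 2 * αr) * t)) / (2 * (α + 2 * αr))) := by
  set P : Matrix (Fin 2) (Fin 2) ℝ := !![1, 1; 1, -1] with hP
  have hPinv : P⁻¹ = !![1/2, 1/2; 1/2, -(1/2)] := by
    apply Matrix.inv_eq_right_inv
    ext i j
    fin_cases i <;> fin_cases j <;>
      simp [hP, Matrix.mul_apply, Fin.sum_univ_two] <;> norm_num
  have hPunit : IsUnit P := by
    rw [Matrix.isUnit_iff_isUnit_det, Matrix.det_fin_two_of]
    norm_num
  have hconj : ∀ s : ℝ, s • A = P * diagonal ![(-α) * s, (-(α + 2 * αr)) * s] * P⁻¹ := by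
    intro s
    rw [hPinv, hA]
    ext i j
    fin_cases i <;> fin_cases j <;>
      simp [hP, Matrix.mul_apply, Fin.sum_univ_two, Matrix.diagonal_apply, Matrix.vecMul_diagonal,
        Matrix.cons_val_zero, Matrix.cons_val_one, Matrix.head_cons] <;> ring
  have hexp : ∀ s : ℝ, exp (s • A) =
      !![(Real.exp ((-α) * s) + Real.exp ((-(α + 2 * αr)) * s)) / 2,
         (Real.exp ((-α) * s) - Real.exp ((-(α + 2 * αr)) * s)) / 2;
         (Real.exp ((-α) * s) - Real.exp ((-(α + 2 * αr)) * s)) / 2,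
         (Real.exp ((-α) * s) + Real.exp ((-(α + 2 * αr)) * s)) / 2] := by
    intro s
    rw [hconj s, Matrix.exp_conj P _ hPunit, Matrix.exp_diagonal, Pi.exp_def, hPinv]
    have hv : (fun i => exp (![(-α) * s, (-(α + 2 * αr)) * s] i)) =
        ![Real.exp ((-α) * s), Real.exp ((-(α + 2 * αr)) * s)] := by
      funext i
      fin_cases i <;> simp [Real.exp_eq_exp_ℝ]
    rw [hv]
    ext i j
    fin_cases i <;> fin_cases j <;>
      simp [hP, Matrix.mul_apply, Fin.sum_univ_two, Matrix.diagonal_apply, Matrix.vecMul_diagonal,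
        Matrix.cons_val_zero, Matrix.cons_val_one, Matrix.head_cons] <;> ring
  have hAT : Aᵀ = A := by
    rw [hA]; ext i j; fin_cases i <;> fin_cases j <;> simp
  have key : ∀ u : ℝ, (exp ((t - u) • A) * G * Gᵀ * exp ((t - u) • Aᵀ)) 0 0 =
      σ ^ 2 / 4 * (Real.exp (-(2 * α) * (t - u)) - 2 * Real.exp (-(2 * (α + αr)) * (t - u))
        + Real.exp (-(2 * (α + 2 * αr)) * (t - u))) := by
    intro u
    rw [hAT, hexp (t - u), hG,
      show -(2 * α) * (t - u) = (-α) * (t - u) + (-α) * (t - u) by ring,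
      show -(2 * (α + αr)) * (t - u) = (-α) * (t - u) + (-(α + 2 * αr)) * (t - u) by ring,
      show -(2 * (α + 2 * αr)) * (t - u)
        = (-(α + 2 * αr)) * (t - u) + (-(α + 2 * αr)) * (t - u) by ring,
      Real.exp_add, Real.exp_add, Real.exp_add]
    simp only [Matrix.mul_apply, Fin.sum_univ_two, Matrix.cons_val_zero, Matrix.cons_val_one,
      Matrix.head_cons, Matrix.transpose_apply, Matrix.cons_val', Matrix.empty_val',
      Matrix.cons_val_fin_one, Matrix.head_fin_const, Matrix.of_apply]
    ring
  simp only [key]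
  have hi : ∀ c : ℝ, IntervalIntegrable (fun u => Real.exp (-c * (t - u))) volume 0 t :=
    fun c => Continuous.intervalIntegrable (by continuity) _ _
  rw [intervalIntegral.integral_const_mul,
    intervalIntegral.integral_add (((hi (2*α)).sub ((hi (2*(α+αr))).const_mul 2)))
      (hi (2*(α+2*αr))),
    intervalIntegral.integral_sub (hi (2*α)) ((hi (2*(α+αr))).const_mul 2),
    intervalIntegral.integral_const_mul,
    int_exp_aux (2*α) t (by positivity),
    int_exp_aux (2*(α+αr)) t (by positivity),
    int_exp_aux (2*(α+2*αr)) t (by positivity)]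
  rw [show -(2*α)*t = -2*α*t by ring, show -(2*(α+αr))*t = -2*(α+αr)*t by ring,
    show -(2*(α+2*αr))*t = -2*(α+2*αr)*t by ring]
  have h1 : (2:ℝ) * α ≠ 0 := by positivity
  have h2 : α + αr ≠ 0 := by positivity
  have h3 : (2:ℝ) * (α + 2 * αr) ≠ 0 := by positivity
  field_simp
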